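/- Gradient noise formula for τ-partition independent sampling (Lemma 1): for every x ∈ ℝ^d, Σ_{j=1}^K q_{C_j} Σ_{S⊆C_j} (Π_{i∈S} p_i)(Π_{i∈C_j∖S} (1−p_i)) · ‖(1/n) Σ_{i∈S} (1/(q_{C_j} p_i)) ∇f_i(x)‖² = (1/n²) Σ_{j=1}^K (1/q_{C_j}) · ( n_{C_j}²·h_{C_j}(x) + Σ_{i∈C_j} ((1−p_i)/p_i)·h_i(x) ), where h_i(x) := ‖∇f_i(x)‖², h_{C_j}(x) := ‖(1/n_{C_j}) Σ_{i∈C_j} ∇f_i(x)‖². -/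

import Mathlib

open Finset

lemma insert_sdiff_insert_aux {α} [DecidableEq α] (a : α) (S T : Finset α) (h : a ∉ T) :
    insert a T \ insert a S = T \ S := by
  ext b; simp only [Finset.mem_sdiff, Finset.mem_insert]
  constructor
  · rintro ⟨hb | hb, h2⟩
    · exact absurd (Or.inl hb) h2
    · exact ⟨hb, fun hS => h2 (Or.inr hS)⟩
  · rintro ⟨hb, h2⟩
    exact ⟨Or.inr hb, fun h3 => h3.elim (fun e => h (e ▸ hb)) h2⟩

lemma branch1 {ι : Type*} [DecidableEq ι] (p : ι → ℝ) {a : ι} {S T : Finset ι}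
    (ha : a ∉ T) (hS : S ⊆ T) :
    (∏ i ∈ S, p i) * ∏ i ∈ insert a T \ S, (1 - p i)
      = (1 - p a) * ((∏ i ∈ S, p i) * ∏ i ∈ T \ S, (1 - p i)) := by
  have haS : a ∉ S := fun h => ha (hS h)
  rw [Finset.insert_sdiff_of_notMem _ haS,
    Finset.prod_insert (fun h => ha (Finset.mem_sdiff.mp h).1)]
  ring

lemma branch2 {ι : Type*} [DecidableEq ι] (p : ι → ℝ) {a : ι} {S T : Finset ι}
    (ha : a ∉ T) (hS : S ⊆ T) :
    (∏ i ∈ insert a S, p i) * ∏ i ∈ insert a T \ insert a S, (1 - p i)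
      = p a * ((∏ i ∈ S, p i) * ∏ i ∈ T \ S, (1 - p i)) := by
  have haS : a ∉ S := fun h => ha (hS h)
  rw [Finset.prod_insert haS, insert_sdiff_insert_aux a S T ha]
  ring

lemma wsum_aux {ι : Type*} [DecidableEq ι] (p : ι → ℝ) (T : Finset ι) :
    ∑ S ∈ T.powerset, ((∏ i ∈ S, p i) * ∏ i ∈ T \ S, (1 - p i)) = 1 := by
  induction T using Finset.induction with
  | empty => simp
  | @insert a T ha ih =>
    rw [Finset.sum_powerset_insert ha]
    have h1 : ∑ S ∈ T.powerset, ((∏ i ∈ S, p i) * ∏ i ∈ insert a T \ S, (1 - p i))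
        = (1 - p a) * ∑ S ∈ T.powerset, ((∏ i ∈ S, p i) * ∏ i ∈ T \ S, (1 - p i)) := by
      rw [Finset.mul_sum]
      exact Finset.sum_congr rfl fun S hS => branch1 p ha (Finset.mem_powerset.mp hS)
    have h2 : ∑ S ∈ T.powerset,
          ((∏ i ∈ insert a S, p i) * ∏ i ∈ insert a T \ insert a S, (1 - p i))
        = p a * ∑ S ∈ T.powerset, ((∏ i ∈ S, p i) * ∏ i ∈ T \ S, (1 - p i)) := by
      rw [Finset.mul_sum]
      exact Finset.sum_congr rfl fun S hS => branch2 p ha (Finset.mem_powerset.mp hS)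
    rw [h1, h2, ih]
    ring

variable {E : Type*} [NormedAddCommGroup E] [InnerProductSpace ℝ E]

lemma mean_aux {ι : Type*} [DecidableEq ι] (p : ι → ℝ) (a : ι → E) (T : Finset ι) :
    ∑ S ∈ T.powerset, ((∏ i ∈ S, p i) * ∏ i ∈ T \ S, (1 - p i)) • (∑ i ∈ S, a i)
      = ∑ i ∈ T, p i • a i := by
  induction T using Finset.induction with
  | empty => simp
  | @insert c T ha ih =>
    rw [Finset.sum_powerset_insert ha]
    have h1 : ∑ S ∈ T.powerset, ((∏ i ∈ S, p i) * ∏ i ∈ insert c T \ S, (1 - p i)) • (∑ i ∈ S, a i)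
        = (1 - p c) • ∑ S ∈ T.powerset, ((∏ i ∈ S, p i) * ∏ i ∈ T \ S, (1 - p i)) • (∑ i ∈ S, a i) := by
      rw [Finset.smul_sum]
      refine Finset.sum_congr rfl fun S hS => ?_
      rw [branch1 p ha (Finset.mem_powerset.mp hS), mul_smul]
    have h2 : ∑ S ∈ T.powerset,
          ((∏ i ∈ insert c S, p i) * ∏ i ∈ insert c T \ insert c S, (1 - p i)) • (∑ i ∈ insert c S, a i)
        = p c • ((∑ S ∈ T.powerset, ((∏ i ∈ S, p i) * ∏ i ∈ T \ S, (1 - p i))) • a c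
            + ∑ S ∈ T.powerset, ((∏ i ∈ S, p i) * ∏ i ∈ T \ S, (1 - p i)) • (∑ i ∈ S, a i)) := by
      conv_rhs => rw [smul_add, Finset.sum_smul, Finset.smul_sum, Finset.smul_sum]
      rw [← Finset.sum_add_distrib]
      refine Finset.sum_congr rfl fun S hS => ?_
      have haS : c ∉ S := fun h => ha ((Finset.mem_powerset.mp hS) h)
      rw [branch2 p ha (Finset.mem_powerset.mp hS), Finset.sum_insert haS]
      module
    rw [h1, h2, ih, wsum_aux, one_smul, Finset.sum_insert ha, smul_add, sub_smul, one_smul]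
    abel
  
lemma second_moment_aux {ι : Type*} [DecidableEq ι] (p : ι → ℝ) (a : ι → E) (T : Finset ι) :
    ∑ S ∈ T.powerset, ((∏ i ∈ S, p i) * ∏ i ∈ T \ S, (1 - p i)) * ‖∑ i ∈ S, a i‖ ^ 2
      = ‖∑ i ∈ T, p i • a i‖ ^ 2 + ∑ i ∈ T, p i * (1 - p i) * ‖a i‖ ^ 2 := by
  induction T using Finset.induction with
  | empty => simp
  | @insert c T ha ih =>
    rw [Finset.sum_powerset_insert ha]
    have h1 : ∑ S ∈ T.powerset, ((∏ i ∈ S, p i) * ∏ i ∈ insert c T \ S, (1 - p i)) * ‖∑ i ∈ S, a i‖ ^ 2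
        = (1 - p c) * ∑ S ∈ T.powerset, ((∏ i ∈ S, p i) * ∏ i ∈ T \ S, (1 - p i)) * ‖∑ i ∈ S, a i‖ ^ 2 := by
      rw [Finset.mul_sum]
      refine Finset.sum_congr rfl fun S hS => ?_
      rw [branch1 p ha (Finset.mem_powerset.mp hS)]
      ring
    have h2 : ∑ S ∈ T.powerset,
          ((∏ i ∈ insert c S, p i) * ∏ i ∈ insert c T \ insert c S, (1 - p i)) * ‖∑ i ∈ insert c S, a i‖ ^ 2
        = p c * ((∑ S ∈ T.powerset, ((∏ i ∈ S, p i) * ∏ i ∈ T \ S, (1 - p i))) * ‖a c‖ ^ 2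
            + 2 * ∑ S ∈ T.powerset, ((∏ i ∈ S, p i) * ∏ i ∈ T \ S, (1 - p i)) * (inner ℝ (a c) (∑ i ∈ S, a i) : ℝ)
            + ∑ S ∈ T.powerset, ((∏ i ∈ S, p i) * ∏ i ∈ T \ S, (1 - p i)) * ‖∑ i ∈ S, a i‖ ^ 2) := by
      simp only [mul_add, Finset.mul_sum, Finset.sum_mul]
      rw [← Finset.sum_add_distrib, ← Finset.sum_add_distrib]
      refine Finset.sum_congr rfl fun S hS => ?_
      have haS : c ∉ S := fun h => ha ((Finset.mem_powerset.mp hS) h)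
      rw [branch2 p ha (Finset.mem_powerset.mp hS), Finset.sum_insert haS, norm_add_sq_real]
      ring
    have hinner : ∑ S ∈ T.powerset, ((∏ i ∈ S, p i) * ∏ i ∈ T \ S, (1 - p i))
          * (inner ℝ (a c) (∑ i ∈ S, a i) : ℝ) = inner ℝ (a c) (∑ i ∈ T, p i • a i) := by
      rw [← mean_aux p a T, inner_sum]
      exact Finset.sum_congr rfl fun S hS => (real_inner_smul_right _ _ _).symm
    rw [h1, h2, ih, hinner, wsum_aux, Finset.sum_insert ha, Finset.sum_insert ha,
      norm_add_sq_real, norm_smul, real_inner_smul_left]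
    simp only [Real.norm_eq_abs, mul_pow, sq_abs]
    rw [real_inner_comm]
    ring

/-- Gradient noise formula for τ-partition independent sampling (Lemma 1). -/
theorem stmt5 {d n K : ℕ} (hn : 1 ≤ n) (hK : 0 < K)
    (f : Fin n → EuclideanSpace ℝ (Fin d) → ℝ)
    (g : Fin n → EuclideanSpace ℝ (Fin d) → EuclideanSpace ℝ (Fin d))
    (hgrad : ∀ i x, HasGradientAt (f i) (g i x) x)
    (C : Fin K → Finset (Fin n))
    (hpart : ∀ i : Fin n, ∃! j, i ∈ C j)
    (hCne : ∀ j, (C j).Nonempty)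
    (q : Fin K → ℝ) (hq : ∀ j, 0 < q j) (hqsum : ∑ j, q j = 1)
    (p : Fin n → ℝ) (hp0 : ∀ i, 0 < p i) (hp1 : ∀ i, p i ≤ 1)
    (x : EuclideanSpace ℝ (Fin d)) :
    ∑ j, q j *
        ∑ S ∈ (C j).powerset,
          ((∏ i ∈ S, p i) * ∏ i ∈ C j \ S, (1 - p i)) *
            ‖(n : ℝ)⁻¹ • ∑ i ∈ S, (q j * p i)⁻¹ • g i x‖ ^ 2
      = ((n : ℝ) ^ 2)⁻¹ *
          ∑ j, (q j)⁻¹ *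
            (((C j).card : ℝ) ^ 2 * ‖((C j).card : ℝ)⁻¹ • ∑ i ∈ C j, g i x‖ ^ 2 +
              ∑ i ∈ C j, (1 - p i) / p i * ‖g i x‖ ^ 2) := by
  have hn0 : (0:ℝ) < (n:ℝ) := by exact_mod_cast hn
  rw [Finset.mul_sum]
  refine Finset.sum_congr rfl fun j _ => ?_
  have hqj := hq j
  have key : ∑ S ∈ (C j).powerset,
      ((∏ i ∈ S, p i) * ∏ i ∈ C j \ S, (1 - p i)) *
        ‖(n : ℝ)⁻¹ • ∑ i ∈ S, (q j * p i)⁻¹ • g i x‖ ^ 2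
      = ‖∑ i ∈ C j, p i • (((n : ℝ) * q j * p i)⁻¹ • g i x)‖ ^ 2
        + ∑ i ∈ C j, p i * (1 - p i) * ‖((n : ℝ) * q j * p i)⁻¹ • g i x‖ ^ 2 := by
    have e : ∀ S ∈ (C j).powerset,
        ((∏ i ∈ S, p i) * ∏ i ∈ C j \ S, (1 - p i)) *
          ‖(n : ℝ)⁻¹ • ∑ i ∈ S, (q j * p i)⁻¹ • g i x‖ ^ 2
        = ((∏ i ∈ S, p i) * ∏ i ∈ C j \ S, (1 - p i)) *
          ‖∑ i ∈ S, ((n : ℝ) * q j * p i)⁻¹ • g i x‖ ^ 2 := by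
      intro S _
      have hsum : (n : ℝ)⁻¹ • ∑ i ∈ S, (q j * p i)⁻¹ • g i x
          = ∑ i ∈ S, ((n : ℝ) * q j * p i)⁻¹ • g i x := by
        rw [Finset.smul_sum]
        refine Finset.sum_congr rfl fun i _ => ?_
        rw [smul_smul, ← mul_inv, mul_assoc]
      rw [hsum]
    calc ∑ S ∈ (C j).powerset,
          ((∏ i ∈ S, p i) * ∏ i ∈ C j \ S, (1 - p i)) *
            ‖(n : ℝ)⁻¹ • ∑ i ∈ S, (q j * p i)⁻¹ • g i x‖ ^ 2
        = ∑ S ∈ (C j).powerset,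
            ((∏ i ∈ S, p i) * ∏ i ∈ C j \ S, (1 - p i)) *
              ‖∑ i ∈ S, ((n : ℝ) * q j * p i)⁻¹ • g i x‖ ^ 2 := Finset.sum_congr rfl e
      _ = _ := second_moment_aux p (fun i => ((n : ℝ) * q j * p i)⁻¹ • g i x) (C j)
  rw [key]
  have hcard : (0:ℝ) < ((C j).card : ℝ) := by
    exact_mod_cast Finset.card_pos.mpr (hCne j)
  have h1 : ∑ i ∈ C j, p i • (((n : ℝ) * q j * p i)⁻¹ • g i x)
      = ((n : ℝ) * q j)⁻¹ • ∑ i ∈ C j, g i x := by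
    rw [Finset.smul_sum]
    refine Finset.sum_congr rfl fun i _ => ?_
    rw [smul_smul]
    congr 1
    rw [show (↑n:ℝ) * q j * p i = p i * (↑n * q j) from by ring, mul_inv,
      ← mul_assoc, mul_inv_cancel₀ (hp0 i).ne', one_mul]
  have h2 : ∑ i ∈ C j, p i * (1 - p i) * ‖((n : ℝ) * q j * p i)⁻¹ • g i x‖ ^ 2
      = ((n:ℝ) * q j)⁻¹ ^ 2 * ∑ i ∈ C j, (1 - p i) / p i * ‖g i x‖ ^ 2 := by
    rw [Finset.mul_sum]
    refine Finset.sum_congr rfl fun i _ => ?_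
    rw [norm_smul]
    simp only [Real.norm_eq_abs, mul_pow, sq_abs]
    have hpi := hp0 i
    field_simp
  rw [h1, h2, norm_smul, norm_smul]
  simp only [Real.norm_eq_abs, mul_pow, sq_abs]
  field_simp
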